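/- Let d : ℕ → ℕ be a function satisfying 2 ≤ d(K) ≤ log₂(K) - log₂(1 + (log K)²) for all sufficiently large K. For each K, let f be a uniformly random polynomial from P_{d(K),K}. Then P(f is irreducible over ℤ) → 1 as K → ∞. -/

import Mathlib

open Polynomial Filter

/-- `PdK d K` is the set of monic integer polynomials of degree `d` with all
coefficients bounded by `K` in absolute value and nonzero constant term. -/
def PdK (d K : ℕ) : Set (Polynomial ℤ) :=
  {f | f.Monic ∧ f.natDegree = d ∧ f.coeff 0 ≠ 0 ∧ ∀ i < d, |f.coeff i| ≤ (K : ℤ)}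

/-- A polynomial with integer coefficients is irreducible over `ℤ` if it cannot be
written as a product of two integer polynomials each of degree strictly smaller
than its own degree. -/
def IrreducibleOverZ (f : Polynomial ℤ) : Prop :=
  ¬ ∃ g h : Polynomial ℤ,
      g.natDegree < f.natDegree ∧ h.natDegree < f.natDegree ∧ f = g * h

section Auxiliary

open Finset

noncomputable def sq2 (p : Polynomial ℂ) (n : ℕ) : ℝ := ∑ i ∈ Finset.range n, ‖p.coeff i‖^2

lemma sq2_nonneg (p : Polynomial ℂ) (n : ℕ) : 0 ≤ sq2 p n :=
  Finset.sum_nonneg fun _ _ => sq_nonneg _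

lemma sq2_stable (p : Polynomial ℂ) {m n : ℕ} (hm : p.natDegree < m) (hmn : m ≤ n) :
    sq2 p n = sq2 p m := by
  unfold sq2
  rw [← Finset.sum_range_add_sum_Ico _ hmn]
  have h0 : ∑ i ∈ Finset.Ico m n, ‖p.coeff i‖^2 = 0 := by
    apply Finset.sum_eq_zero
    intro i hi
    have : p.natDegree < i := lt_of_lt_of_le hm (Finset.mem_Ico.mp hi).1
    rw [p.coeff_eq_zero_of_natDegree_lt this]
    simp
  rw [h0, add_zero]

lemma sq2_X_mul (q : Polynomial ℂ) (n : ℕ) :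
    sq2 (X * q) (n + 1) = sq2 q n := by
  unfold sq2
  rw [Finset.sum_range_succ']
  simp [Polynomial.coeff_X_mul]

lemma single_le_sq2 (p : Polynomial ℂ) {i n : ℕ} (h : i < n) :
    ‖p.coeff i‖^2 ≤ sq2 p n := by
  unfold sq2
  exact Finset.single_le_sum (f := fun i => ‖p.coeff i‖^2) (fun _ _ => sq_nonneg _) (Finset.mem_range.mpr h)

lemma sq2_swap (q : Polynomial ℂ) (ρ : ℂ) {n : ℕ} (hn : q.natDegree + 2 ≤ n) :
    sq2 ((X - C ρ) * q) n = sq2 ((C ((starRingEnd ℂ) ρ) * X - 1) * q) n := by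
  obtain ⟨m, rfl⟩ : ∃ m, n = m + 1 := ⟨n - 1, by omega⟩
  have key : ∀ i : ℕ, ‖((X - C ρ) * q).coeff i‖^2
      = ‖((C ((starRingEnd ℂ) ρ) * X - 1) * q).coeff i‖^2
        + (1 - Complex.normSq ρ) * (‖(X * q).coeff i‖^2 - ‖q.coeff i‖^2) := by
    intro i
    have e1 : ((X - C ρ) * q).coeff i = (X * q).coeff i - ρ * q.coeff i := by
      rw [sub_mul, Polynomial.coeff_sub, Polynomial.coeff_C_mul]
    have e2 : ((C ((starRingEnd ℂ) ρ) * X - 1) * q).coeff i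
        = (starRingEnd ℂ) ρ * (X * q).coeff i - q.coeff i := by
      rw [sub_mul, one_mul, Polynomial.coeff_sub, mul_assoc, Polynomial.coeff_C_mul]
    rw [e1, e2]
    set a := (X * q).coeff i
    set b := q.coeff i
    have n1 : ‖a - ρ * b‖^2 = Complex.normSq (a - ρ * b) := by
      rw [← Complex.sq_norm]
    have n2 : ‖(starRingEnd ℂ) ρ * a - b‖^2 = Complex.normSq ((starRingEnd ℂ) ρ * a - b) := by
      rw [← Complex.sq_norm]
    have n3 : ‖a‖^2 = Complex.normSq a := by rw [← Complex.sq_norm]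
    have n4 : ‖b‖^2 = Complex.normSq b := by rw [← Complex.sq_norm]
    rw [n1, n2, n3, n4, Complex.normSq_sub, Complex.normSq_sub]
    have cross : a * (starRingEnd ℂ) (ρ * b) = ((starRingEnd ℂ) ρ * a) * (starRingEnd ℂ) b := by
      rw [map_mul]; ring
    rw [cross]
    rw [Complex.normSq_mul, Complex.normSq_mul, Complex.normSq_conj]
    ring
  unfold sq2
  rw [Finset.sum_congr rfl (fun i _ => key i), Finset.sum_add_distrib, ← Finset.mul_sum]
  have hz : (∑ i ∈ Finset.range (m+1), (‖(X * q).coeff i‖^2 - ‖q.coeff i‖^2)) = 0 := by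
    rw [Finset.sum_sub_distrib]
    have h1 : sq2 (X * q) (m + 1) = sq2 q m := sq2_X_mul q m
    have h2 : sq2 q m = sq2 q (m+1) := by
      by_cases hq : q = 0
      · simp [hq, sq2]
      · exact (sq2_stable q (by omega) (by omega)).symm
    unfold sq2 at h1 h2
    rw [h1, h2]
    ring
  rw [hz, mul_zero, add_zero]


/-- Mahler measure of a monic complex polynomial. -/
noncomputable def mah (p : Polynomial ℂ) : ℝ := (p.roots.map (fun z => max 1 ‖z‖)).prod

lemma one_le_mah (p : Polynomial ℂ) : 1 ≤ mah p := by
  apply Multiset.one_le_prod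
  intro a ha
  obtain ⟨z, _, rfl⟩ := Multiset.mem_map.mp ha
  exact le_max_left _ _

lemma mah_mul {p q : Polynomial ℂ} (hp : p ≠ 0) (hq : q ≠ 0) :
    mah (p * q) = mah p * mah q := by
  unfold mah
  rw [Polynomial.roots_mul (mul_ne_zero hp hq), Multiset.map_add, Multiset.prod_add]

lemma norm_msprod (s : Multiset ℂ) : ‖s.prod‖ = (s.map (fun z => ‖z‖)).prod := by
  induction s using Multiset.induction with
  | empty => simp
  | cons z s ih => simp [norm_mul, ih]

lemma natDegree_swapFactor_le (z : ℂ) : (C ((starRingEnd ℂ) z) * X - 1).natDegree ≤ 1 := by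
  apply le_trans (Polynomial.natDegree_sub_le _ _)
  simp only [sup_le_iff]
  constructor
  · exact le_trans (Polynomial.natDegree_C_mul_le _ _) (by simp)
  · simp

lemma sq2_move (u : Multiset ℂ) (p : Polynomial ℂ) {n : ℕ}
    (hn : Multiset.card u + p.natDegree + 1 ≤ n) :
    sq2 ((u.map (fun z => X - C z)).prod * p) n
      = sq2 ((u.map (fun z => C ((starRingEnd ℂ) z) * X - 1)).prod * p) n := by
  induction u using Multiset.induction generalizing p with
  | empty => simp
  | cons z u ih =>
    by_cases hp : p = 0
    · simp [hp, sq2]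
    rw [Multiset.map_cons, Multiset.map_cons, Multiset.prod_cons, Multiset.prod_cons]
    have hdq : ((u.map (fun z => X - C z)).prod * p).natDegree + 2 ≤ n := by
      have h1 : (u.map (fun z => X - C z)).prod.natDegree ≤ Multiset.card u := by
        apply le_trans (Polynomial.natDegree_multiset_prod_le _)
        rw [Multiset.map_map]
        apply le_trans (Multiset.sum_le_card_nsmul _ 1 ?_)
        · simp
        · intro x hx
          obtain ⟨z', _, rfl⟩ := Multiset.mem_map.mp hx
          simp [Polynomial.natDegree_X_sub_C]
      have h2 : ((u.map (fun z => X - C z)).prod * p).natDegree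
          ≤ (u.map (fun z => X - C z)).prod.natDegree + p.natDegree :=
        Polynomial.natDegree_mul_le
      simp only [Multiset.card_cons] at hn
      omega
    calc sq2 ((X - C z) * (u.map (fun z => X - C z)).prod * p) n
        = sq2 ((X - C z) * ((u.map (fun z => X - C z)).prod * p)) n := by rw [mul_assoc]
      _ = sq2 ((C ((starRingEnd ℂ) z) * X - 1) * ((u.map (fun z => X - C z)).prod * p)) n :=
          sq2_swap _ z hdq
      _ = sq2 ((u.map (fun z => X - C z)).prod * ((C ((starRingEnd ℂ) z) * X - 1) * p)) n := by
          rw [mul_left_comm]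
      _ = sq2 ((u.map (fun z => C ((starRingEnd ℂ) z) * X - 1)).prod
            * ((C ((starRingEnd ℂ) z) * X - 1) * p)) n := by
          apply ih
          have := Polynomial.natDegree_mul_le (p := C ((starRingEnd ℂ) z) * X - 1) (q := p)
          have := natDegree_swapFactor_le z
          simp only [Multiset.card_cons] at hn
          omega
      _ = sq2 ((C ((starRingEnd ℂ) z) * X - 1) * (u.map (fun z => C ((starRingEnd ℂ) z) * X - 1)).prod * p) n := by
          rw [mul_assoc, mul_left_comm]

/-- Landau's inequality for monic polynomials. -/
lemma mah_sq_le_sq2 (p : Polynomial ℂ) (hp : p.Monic) {n : ℕ} (hn : p.natDegree < n) :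
    mah p ^ 2 ≤ sq2 p n := by
  classical
  have hsplit : Splits p := IsAlgClosed.splits p
  have hcard : Multiset.card p.roots = p.natDegree := Polynomial.splits_iff_card_roots.mp hsplit
  set u := p.roots.filter (fun z => 1 < ‖z‖) with hu
  set v := p.roots.filter (fun z => ¬ 1 < ‖z‖) with hv
  have huv : u + v = p.roots := Multiset.filter_add_not _ _
  -- p as a product
  have hprod : p = (u.map (fun z => X - C z)).prod * (v.map (fun z => X - C z)).prod := by
    conv_lhs => rw [hsplit.eq_prod_roots_of_monic hp]
    rw [← huv, Multiset.map_add, Multiset.prod_add]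
  -- mah p = product over u of norms
  have hmah : mah p = (u.map (fun z => ‖z‖)).prod := by
    unfold mah
    rw [← huv, Multiset.map_add, Multiset.prod_add]
    have h1 : (u.map (fun z => max 1 ‖z‖)).prod = (u.map (fun z => ‖z‖)).prod := by
      congr 1
      apply Multiset.map_congr rfl
      intro z hz
      have := (Multiset.mem_filter.mp hz).2
      exact max_eq_right (le_of_lt this)
    have h2 : (v.map (fun z => max 1 ‖z‖)).prod = 1 := by
      apply Multiset.prod_eq_one
      intro a ha
      obtain ⟨z, hz, rfl⟩ := Multiset.mem_map.mp ha
      have := (Multiset.mem_filter.mp hz).2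
      exact max_eq_left (not_lt.mp this)
    rw [h1, h2, mul_one]
  set F := (u.map (fun z => C ((starRingEnd ℂ) z) * X - 1)).prod * (v.map (fun z => X - C z)).prod
    with hF
  have hsq : sq2 p n = sq2 F n := by
    conv_lhs => rw [hprod]
    apply sq2_move
    have hdv : (v.map (fun z => X - C z)).prod.natDegree = Multiset.card v := by
      rw [Polynomial.natDegree_multiset_prod]
      · rw [Multiset.map_map]
        have : ∀ x ∈ v, (Polynomial.natDegree ∘ fun z => X - C z) x = 1 := by
          intro x _; simp [Polynomial.natDegree_X_sub_C]
        rw [Multiset.map_congr rfl this]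
        simp [Multiset.map_const']
      · intro h0
        obtain ⟨z, _, hz⟩ := Multiset.mem_map.mp h0
        exact Polynomial.X_sub_C_ne_zero z hz
    rw [hdv]
    have : Multiset.card u + Multiset.card v = p.natDegree := by
      rw [← hcard, ← huv]; simp
    omega
  -- leading coeff of F
  have hFlead : ‖F.leadingCoeff‖ = mah p := by
    rw [hF, Polynomial.leadingCoeff_mul, Polynomial.leadingCoeff_multiset_prod,
      Polynomial.leadingCoeff_multiset_prod]
    have hv1 : ((v.map (fun z => X - C z)).map (fun f => f.leadingCoeff)).prod = 1 := by
      apply Multiset.prod_eq_one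
      intro a ha
      rw [Multiset.map_map] at ha
      obtain ⟨z, _, rfl⟩ := Multiset.mem_map.mp ha
      simp [Polynomial.monic_X_sub_C z]
    rw [hv1, mul_one, hmah, Multiset.map_map, norm_msprod]
    rw [Multiset.map_map]
    congr 1
    apply Multiset.map_congr rfl
    intro z hz
    have hz1 : 1 < ‖z‖ := (Multiset.mem_filter.mp hz).2
    have hzne : (starRingEnd ℂ) z ≠ 0 := by
      simp only [ne_eq, starRingEnd_apply, star_eq_zero]
      intro h; rw [h] at hz1; norm_num at hz1
    simp only [Function.comp_apply]
    have : (C ((starRingEnd ℂ) z) * X - 1).leadingCoeff = (starRingEnd ℂ) z := by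
      have hdeg : (C ((starRingEnd ℂ) z) * X).natDegree = 1 := by
        rw [Polynomial.natDegree_C_mul hzne, Polynomial.natDegree_X]
      have hd2 : (C ((starRingEnd ℂ) z) * X - 1).natDegree = 1 := by
        rw [Polynomial.natDegree_sub_eq_left_of_natDegree_lt, hdeg]
        rw [hdeg]
        simp [Polynomial.natDegree_one]
      rw [Polynomial.leadingCoeff, hd2, Polynomial.coeff_sub]
      simp [Polynomial.coeff_C_mul, Polynomial.coeff_one]
    rw [this]
    simp
  have hFdeg : F.natDegree < n := by
    have h1 : F.natDegree ≤ Multiset.card u + Multiset.card v := by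
      apply le_trans Polynomial.natDegree_mul_le
      gcongr
      · apply le_trans (Polynomial.natDegree_multiset_prod_le _)
        rw [Multiset.map_map]
        apply le_trans (Multiset.sum_le_card_nsmul _ 1 ?_)
        · simp
        · intro x hx
          obtain ⟨z, _, rfl⟩ := Multiset.mem_map.mp hx
          exact natDegree_swapFactor_le z
      · apply le_trans (Polynomial.natDegree_multiset_prod_le _)
        rw [Multiset.map_map]
        apply le_trans (Multiset.sum_le_card_nsmul _ 1 ?_)
        · simp
        · intro x hx
          obtain ⟨z, _, rfl⟩ := Multiset.mem_map.mp hx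
          simp [Polynomial.natDegree_X_sub_C]
    have : Multiset.card u + Multiset.card v = p.natDegree := by
      rw [← hcard, ← huv]; simp
    omega
  calc mah p ^ 2 = ‖F.coeff F.natDegree‖^2 := by rw [Polynomial.coeff_natDegree, hFlead]
    _ ≤ sq2 F n := single_le_sq2 F hFdeg
    _ = sq2 p n := hsq.symm



lemma prod_max_nonneg (t : Multiset ℂ) : 0 ≤ (t.map (fun z => max 1 ‖z‖)).prod := by
  apply Multiset.prod_nonneg
  intro x hx
  obtain ⟨z, _, rfl⟩ := Multiset.mem_map.mp hx
  positivity

lemma norm_prod_le_of_le' {s t : Multiset ℂ} (h : t ≤ s) :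
    (t.map (fun z => ‖z‖)).prod ≤ (s.map (fun z => max 1 ‖z‖)).prod := by
  have step1 : ∀ t : Multiset ℂ, (t.map (fun z => ‖z‖)).prod ≤ (t.map (fun z => max 1 ‖z‖)).prod := by
    intro t
    induction t using Multiset.induction with
    | empty => simp
    | cons z t ih =>
      simp only [Multiset.map_cons, Multiset.prod_cons]
      apply mul_le_mul (le_max_right _ _) ih
      · apply Multiset.prod_nonneg
        intro x hx
        obtain ⟨z', _, rfl⟩ := Multiset.mem_map.mp hx
        positivity
      · positivity
  obtain ⟨w, rfl⟩ := Multiset.le_iff_exists_add.mp h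
  calc (t.map (fun z => ‖z‖)).prod ≤ (t.map (fun z => max 1 ‖z‖)).prod := step1 t
    _ ≤ (t.map (fun z => max 1 ‖z‖)).prod * (w.map (fun z => max 1 ‖z‖)).prod := by
        nlinarith [prod_max_nonneg t, prod_max_nonneg w,
          Multiset.one_le_prod (s := w.map (fun z => max 1 ‖z‖)) (by
            intro a ha
            obtain ⟨z, _, rfl⟩ := Multiset.mem_map.mp ha
            exact le_max_left _ _)]
    _ = ((t + w).map (fun z => max 1 ‖z‖)).prod := by rw [Multiset.map_add, Multiset.prod_add]

lemma choose_le_two_pow (a k : ℕ) : a.choose k ≤ 2 ^ a := by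
  by_cases hk : k ≤ a
  · calc a.choose k ≤ ∑ m ∈ Finset.range (a + 1), a.choose m :=
        Finset.single_le_sum (f := fun m => a.choose m) (fun _ _ => Nat.zero_le _)
          (Finset.mem_range.mpr (by omega))
      _ = 2 ^ a := Nat.sum_range_choose a
  · rw [Nat.choose_eq_zero_of_lt (by omega)]; exact Nat.zero_le _

lemma coeff_norm_le_mah (g : Polynomial ℤ) (hg : g.Monic) (i : ℕ) :
    (|g.coeff i| : ℝ) ≤ 2 ^ g.natDegree * mah (g.map (Int.castRingHom ℂ)) := by
  classical
  set G := g.map (Int.castRingHom ℂ) with hG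
  have hGm : G.Monic := hg.map _
  have hGdeg : G.natDegree = g.natDegree := hg.natDegree_map _
  have hone : (1:ℝ) ≤ mah G := one_le_mah G
  have hcast : (|g.coeff i| : ℝ) = ‖G.coeff i‖ := by
    rw [hG, Polynomial.coeff_map]
    simp only [eq_intCast, Complex.norm_intCast]
  by_cases hi : i ≤ g.natDegree
  · have hsplit : Splits G := IsAlgClosed.splits G
    have hcard : Multiset.card G.roots = G.natDegree := Polynomial.splits_iff_card_roots.mp hsplit
    have hik : i ≤ Multiset.card G.roots := by omega
    have hcoeff : G.coeff i = (-1) ^ (Multiset.card G.roots - i)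
        * G.roots.esymm (Multiset.card G.roots - i) := by
      conv_lhs => rw [hsplit.eq_prod_roots_of_monic hGm]
      exact Multiset.prod_X_sub_C_coeff G.roots hik
    rw [hcast, hcoeff, norm_mul, norm_pow, norm_neg, norm_one, one_pow, one_mul]
    set m := Multiset.card G.roots - i
    have hesymm : G.roots.esymm m = ((Multiset.powersetCard m G.roots).map Multiset.prod).sum := rfl
    rw [hesymm]
    calc ‖((Multiset.powersetCard m G.roots).map Multiset.prod).sum‖
        ≤ (((Multiset.powersetCard m G.roots).map Multiset.prod).map (fun x => ‖x‖)).sum :=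
          norm_multiset_sum_le _
      _ ≤ (Multiset.card (((Multiset.powersetCard m G.roots).map Multiset.prod).map (fun x => ‖x‖)))
            • mah G := by
          apply Multiset.sum_le_card_nsmul
          intro x hx
          rw [Multiset.map_map] at hx
          obtain ⟨t, ht, rfl⟩ := Multiset.mem_map.mp hx
          have hle : t ≤ G.roots := (Multiset.mem_powersetCard.mp ht).1
          simp only [Function.comp_apply]
          rw [norm_msprod]
          exact norm_prod_le_of_le' hle
      _ ≤ 2 ^ g.natDegree * mah G := by
          simp only [Multiset.card_map, Multiset.card_powersetCard, nsmul_eq_mul]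
          apply mul_le_mul_of_nonneg_right _ (by linarith)
          have := choose_le_two_pow (Multiset.card G.roots) m
          calc ((Multiset.card G.roots).choose m : ℝ) ≤ (2:ℝ) ^ (Multiset.card G.roots) := by
                exact_mod_cast this
            _ = 2 ^ g.natDegree := by rw [hcard, hGdeg]
  · rw [g.coeff_eq_zero_of_natDegree_lt (by omega)]
    simp only [abs_zero, Int.cast_zero]
    positivity


lemma monic_ext_coeff {a : ℕ} {g₁ g₂ : Polynomial ℤ} (h₁ : g₁.Monic) (h₂ : g₂.Monic)
    (d₁ : g₁.natDegree = a) (d₂ : g₂.natDegree = a)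
    (hc : ∀ i < a, g₁.coeff i = g₂.coeff i) : g₁ = g₂ := by
  ext i
  rcases lt_trichotomy i a with h | h | h
  · exact hc i h
  · subst h
    rw [← d₁, h₁.coeff_natDegree, d₁, ← d₂, h₂.coeff_natDegree]
  · rw [g₁.coeff_eq_zero_of_natDegree_lt (by omega), g₂.coeff_eq_zero_of_natDegree_lt (by omega)]

lemma top_window_cancel {a b : ℕ} {g h₁ h₂ : Polynomial ℤ}
    (hg : g.Monic) (hga : g.natDegree = a)
    (hm₁ : h₁.Monic) (hd₁ : h₁.natDegree = b)
    (hm₂ : h₂.Monic) (hd₂ : h₂.natDegree = b)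
    (hc : ∀ j < b, (g * h₁).coeff (a + j) = (g * h₂).coeff (a + j)) : h₁ = h₂ := by
  by_contra hne
  have he : h₁ - h₂ ≠ 0 := sub_ne_zero.mpr hne
  set e := h₁ - h₂ with hedef
  have hdegle : e.natDegree ≤ b := by
    apply le_trans (Polynomial.natDegree_sub_le _ _)
    omega
  have hdeglt : e.natDegree < b := by
    rcases lt_or_eq_of_le hdegle with h | h
    · exact h
    · exfalso
      have : e.coeff b = 0 := by
        rw [hedef, Polynomial.coeff_sub, ← hd₁, hm₁.coeff_natDegree, hd₁, ← hd₂,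
          hm₂.coeff_natDegree]
        ring
      rw [← h] at this
      exact he (Polynomial.leadingCoeff_eq_zero.mp this)
  have hzero : (g * e).coeff (a + e.natDegree) = 0 := by
    rw [hedef, mul_sub, Polynomial.coeff_sub, hc e.natDegree hdeglt]
    ring
  have hne' : (g * e).coeff (a + e.natDegree) ≠ 0 := by
    have hdeg : (g * e).natDegree = a + e.natDegree := by
      rw [Polynomial.natDegree_mul hg.ne_zero he, hga]
    rw [← hdeg, Polynomial.coeff_natDegree, Polynomial.leadingCoeff_mul, hg.leadingCoeff, one_mul]
    exact Polynomial.leadingCoeff_ne_zero.mpr he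
  exact hne' hzero

lemma low_window_cancel {a b : ℕ} {h g₁ g₂ : Polynomial ℤ}
    (hh : h.Monic) (hhb : h.natDegree = b) (hh0 : h.coeff 0 ≠ 0)
    (hm₁ : g₁.Monic) (hd₁ : g₁.natDegree = a)
    (hm₂ : g₂.Monic) (hd₂ : g₂.natDegree = a)
    (hc : ∀ j < a, (g₁ * h).coeff j = (g₂ * h).coeff j) : g₁ = g₂ := by
  by_contra hne
  have he : g₁ - g₂ ≠ 0 := sub_ne_zero.mpr hne
  set e := g₁ - g₂ with hedef
  have hdegle : e.natDegree ≤ a := by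
    apply le_trans (Polynomial.natDegree_sub_le _ _)
    omega
  have hdeglt : e.natDegree < a := by
    rcases lt_or_eq_of_le hdegle with h' | h'
    · exact h'
    · exfalso
      have : e.coeff a = 0 := by
        rw [hedef, Polynomial.coeff_sub, ← hd₁, hm₁.coeff_natDegree, hd₁, ← hd₂,
          hm₂.coeff_natDegree]
        ring
      rw [← h'] at this
      exact he (Polynomial.leadingCoeff_eq_zero.mp this)
  set t := e.natTrailingDegree with ht
  have htlt : t < a := lt_of_le_of_lt (Polynomial.natTrailingDegree_le_natDegree e) hdeglt
  have hkey : (e * h).coeff t = e.coeff t * h.coeff 0 := by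
    rw [Polynomial.coeff_mul]
    apply Finset.sum_eq_single_of_mem (t, 0)
    · simp [Finset.mem_antidiagonal]
    · intro p hp hpne
      have hpt : p.1 + p.2 = t := Finset.HasAntidiagonal.mem_antidiagonal.mp hp
      have : p.1 < t := by
        rcases Nat.lt_or_ge p.1 t with h' | h'
        · exact h'
        · exfalso
          have : p.1 = t := by omega
          apply hpne
          have : p.2 = 0 := by omega
          ext <;> simp_all
      rw [Polynomial.coeff_eq_zero_of_lt_natTrailingDegree (by omega), zero_mul]
  have hene : e.coeff t ≠ 0 := by
    have : e.trailingCoeff ≠ 0 := fun hc0 => he (Polynomial.trailingCoeff_eq_zero.mp hc0)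
    rwa [Polynomial.trailingCoeff] at this
  have hzero : (e * h).coeff t = 0 := by
    rw [hedef, sub_mul, Polynomial.coeff_sub, hc t htlt]
    ring
  rw [hkey] at hzero
  exact (mul_ne_zero hene hh0) hzero


lemma pdk_finite (d K : ℕ) : (PdK d K).Finite := by
  rw [← Set.finite_coe_iff]
  apply Finite.of_injective (f := fun (f : PdK d K) (i : Fin (d+1)) =>
    (⟨(f : Polynomial ℤ).coeff i, by
      obtain ⟨hm, hdeg, h0, hb⟩ := f.2
      simp only [Finset.mem_Icc]
      rcases Nat.lt_or_ge (i : ℕ) d with h | h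
      · have := hb i h
        have h1 := abs_le.mp this
        omega
      · have hid : (i : ℕ) = d := by omega
        have h1 : (f : Polynomial ℤ).coeff i = 1 := by
          simp only [hid, ← hdeg]
          exact hm.coeff_natDegree
        rw [h1]
        omega⟩ :
      (Finset.Icc (-(K:ℤ)-1) ((K:ℤ)+1))))
  intro f₁ f₂ hf
  ext1
  ext i
  rcases Nat.lt_or_ge i (d+1) with h | h
  · exact Subtype.ext_iff.mp (congrFun hf ⟨i, h⟩)
  · obtain ⟨_, hdeg1, _, _⟩ := f₁.2
    obtain ⟨_, hdeg2, _, _⟩ := f₂.2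
    rw [Polynomial.coeff_eq_zero_of_natDegree_lt (by omega),
      Polynomial.coeff_eq_zero_of_natDegree_lt (by omega)]

instance pdkFinite (d K : ℕ) : Finite (PdK d K) := (pdk_finite d K).to_subtype

lemma pdk_card_lb (d K : ℕ) (hd : 1 ≤ d) (hK : 1 ≤ K) :
    K * (2 * K + 1)^(d - 1) ≤ Nat.card (PdK d K) := by
  classical
  set D := (Finset.Icc (1:ℤ) K) × (Fin (d-1) → (Finset.Icc (-(K:ℤ)) K)) with hD
  have hcard : Nat.card D = K * (2 * K + 1)^(d-1) := by
    rw [Nat.card_eq_fintype_card, Fintype.card_prod, Fintype.card_coe, Int.card_Icc,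
      Fintype.card_pi]
    simp only [Fintype.card_coe, Int.card_Icc, Finset.prod_const, Finset.card_univ,
      Fintype.card_fin]
    congr 1
    · omega
    · congr 1
      omega
  set w : D → ℕ → ℤ := fun p j => if j = 0 then (p.1 : ℤ) else
    (if h : j - 1 < d - 1 then (p.2 ⟨j-1, h⟩ : ℤ) else 0) with hw
  set Φ : D → Polynomial ℤ := fun p => X^d + ∑ i ∈ Finset.range d, C (w p i) * X^i with hΦ
  have hr_deg : ∀ p : D, (∑ i ∈ Finset.range d, C (w p i) * X^i).degree < ((d:ℕ) : WithBot ℕ) := by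
    intro p
    apply lt_of_le_of_lt (Polynomial.degree_sum_le _ _)
    rw [Finset.sup_lt_iff (by exact_mod_cast WithBot.bot_lt_coe d)]
    intro i hi
    apply lt_of_le_of_lt (Polynomial.degree_C_mul_X_pow_le _ _)
    exact_mod_cast Finset.mem_range.mp hi
  have hmonic : ∀ p : D, (Φ p).Monic := fun p => Polynomial.monic_X_pow_add (hr_deg p)
  have hdeg : ∀ p : D, (Φ p).natDegree = d := by
    intro p
    apply Polynomial.natDegree_eq_of_degree_eq_some
    rw [hΦ]
    simp only
    rw [Polynomial.degree_add_eq_left_of_degree_lt, Polynomial.degree_X_pow]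
    rw [Polynomial.degree_X_pow]
    exact hr_deg p
  have hcoeff : ∀ (p : D) (j : ℕ), j < d → (Φ p).coeff j = w p j := by
    intro p j hj
    rw [hΦ]
    simp only [Polynomial.coeff_add, Polynomial.coeff_X_pow, Polynomial.finset_sum_coeff]
    rw [if_neg (by omega)]
    rw [Finset.sum_eq_single j]
    · simp [Polynomial.coeff_C_mul, Polynomial.coeff_X_pow]
    · intro i _ hij
      simp [Polynomial.coeff_C_mul, Polynomial.coeff_X_pow, Ne.symm hij]
    · intro hj'
      exact absurd (Finset.mem_range.mpr hj) hj'
  have hmem : ∀ p : D, Φ p ∈ PdK d K := by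
    intro p
    refine ⟨hmonic p, hdeg p, ?_, ?_⟩
    · have hw0 : w p 0 = (p.1 : ℤ) := by simp [hw]
      rw [hcoeff p 0 (by omega), hw0]
      have := Finset.mem_Icc.mp p.1.2
      omega
    · intro i hi
      rw [hcoeff p i hi]
      by_cases h0 : i = 0
      · have hwi : w p i = (p.1 : ℤ) := by simp [hw, h0]
        rw [hwi, abs_le]
        have := Finset.mem_Icc.mp p.1.2
        omega
      · have hlt : i - 1 < d - 1 := by omega
        have hwi : w p i = (p.2 ⟨i-1, hlt⟩ : ℤ) := by simp [hw, h0, hlt]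
        rw [hwi, abs_le]
        have := Finset.mem_Icc.mp (p.2 ⟨i-1, hlt⟩).2
        omega
  have hinj : Function.Injective (fun p : D => (⟨Φ p, hmem p⟩ : PdK d K)) := by
    intro p₁ p₂ hp
    have hΦeq : Φ p₁ = Φ p₂ := congrArg Subtype.val hp
    have hweq : ∀ j, j < d → w p₁ j = w p₂ j := by
      intro j hj
      rw [← hcoeff p₁ j hj, ← hcoeff p₂ j hj, hΦeq]
    have hw0 : ∀ p : D, w p 0 = (p.1 : ℤ) := fun p => by simp [hw]
    have h1 : p₁.1 = p₂.1 := by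
      have := hweq 0 (by omega)
      rw [hw0 p₁, hw0 p₂] at this
      exact Subtype.ext this
    have h2 : p₁.2 = p₂.2 := by
      funext i
      have hi : (i : ℕ) + 1 < d := by omega
      have hlt : ((i:ℕ) + 1) - 1 < d - 1 := by omega
      have hwp : ∀ p : D, w p ((i:ℕ)+1) = (p.2 ⟨(i:ℕ)+1-1, hlt⟩ : ℤ) := by
        intro p
        simp [hw, hlt]
      have := hweq ((i : ℕ) + 1) hi
      rw [hwp p₁, hwp p₂] at this
      apply Subtype.ext
      have hieq : (⟨(i:ℕ)+1-1, hlt⟩ : Fin (d-1)) = i := by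
        apply Fin.ext
        simp
      rw [hieq] at this
      exact this
    exact Prod.ext h1 h2
  calc K * (2 * K + 1)^(d-1) = Nat.card D := hcard.symm
    _ ≤ Nat.card (PdK d K) := Nat.card_le_card_of_injective _ hinj


/-- Reducible elements of the box whose small factor has degree `a` and coefficients
bounded by `c`. -/
def RedA (d K a b : ℕ) (c : ℤ) : Set (Polynomial ℤ) :=
  {f | f ∈ PdK d K ∧ ∃ g h : Polynomial ℤ, g.Monic ∧ h.Monic ∧ g.natDegree = a ∧
    h.natDegree = b ∧ f = g * h ∧ ∀ i < a, |g.coeff i| ≤ c}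

/-- Reducible elements of the box whose large factor has degree `b` and coefficients
bounded by `c`. -/
def RedB (d K a b : ℕ) (c : ℤ) : Set (Polynomial ℤ) :=
  {f | f ∈ PdK d K ∧ ∃ g h : Polynomial ℤ, g.Monic ∧ h.Monic ∧ g.natDegree = a ∧
    h.natDegree = b ∧ f = g * h ∧ ∀ i < b, |h.coeff i| ≤ c}

lemma redA_card_le (d K a b : ℕ) (c : ℤ) (hab : a + b = d) :
    Nat.card (RedA d K a b c) ≤ ((2*c+1).toNat)^a * (2*K+1)^b := by
  classical
  haveI : Finite (RedA d K a b c) :=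
    ((pdk_finite d K).subset (fun f hf => hf.1)).to_subtype
  have hex : ∀ f : RedA d K a b c, ∃ gh : Polynomial ℤ × Polynomial ℤ,
      gh.1.Monic ∧ gh.2.Monic ∧ gh.1.natDegree = a ∧ gh.2.natDegree = b ∧
      (f : Polynomial ℤ) = gh.1 * gh.2 ∧ ∀ i < a, |gh.1.coeff i| ≤ c := by
    intro f
    obtain ⟨_, g, h, hg, hh, hga, hhb, hfe, hbd⟩ := f.2
    exact ⟨(g, h), hg, hh, hga, hhb, hfe, hbd⟩
  choose W hW1 hW2 hW3 hW4 hW5 hW6 using hex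
  set Ψ : RedA d K a b c →
      ((Fin a → (Finset.Icc (-c) c)) × (Fin b → (Finset.Icc (-(K:ℤ)) K))) :=
    fun f => (fun i => ⟨(W f).1.coeff i, by
        have := hW6 f i i.2
        rw [Finset.mem_Icc]
        have := abs_le.mp this
        omega⟩,
      fun j => ⟨(f : Polynomial ℤ).coeff (a + j), by
        obtain ⟨hm, hdeg, h0, hb⟩ := f.2.1
        rw [Finset.mem_Icc]
        have hj : a + (j : ℕ) < d := by omega
        have := abs_le.mp (hb _ hj)
        omega⟩) with hΨ
  have hinj : Function.Injective Ψ := by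
    intro f₁ f₂ hf
    have h1 := congrArg Prod.fst hf
    have h2 := congrArg Prod.snd hf
    have hgeq : (W f₁).1 = (W f₂).1 := by
      apply monic_ext_coeff (hW1 f₁) (hW1 f₂) (hW3 f₁) (hW3 f₂)
      intro i hi
      exact Subtype.ext_iff.mp (congrFun h1 ⟨i, hi⟩)
    have hheq : (W f₁).2 = (W f₂).2 := by
      apply top_window_cancel (hW1 f₁) (hW3 f₁) (hW2 f₁) (hW4 f₁) (hW2 f₂) (hW4 f₂)
      intro j hj
      have hcoord := Subtype.ext_iff.mp (congrFun h2 ⟨j, hj⟩)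
      calc ((W f₁).1 * (W f₁).2).coeff (a+j) = (f₁ : Polynomial ℤ).coeff (a+j) := by
            rw [← hW5 f₁]
        _ = (f₂ : Polynomial ℤ).coeff (a+j) := hcoord
        _ = ((W f₂).1 * (W f₂).2).coeff (a+j) := by rw [← hW5 f₂]
        _ = ((W f₁).1 * (W f₂).2).coeff (a+j) := by rw [hgeq]
    apply Subtype.ext
    rw [hW5 f₁, hW5 f₂, hgeq, hheq]
  calc Nat.card (RedA d K a b c) ≤
      Nat.card ((Fin a → (Finset.Icc (-c) c)) × (Fin b → (Finset.Icc (-(K:ℤ)) K))) :=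
        Nat.card_le_card_of_injective _ hinj
    _ = ((2*c+1).toNat)^a * (2*K+1)^b := by
        rw [Nat.card_eq_fintype_card, Fintype.card_prod, Fintype.card_pi, Fintype.card_pi]
        simp only [Fintype.card_coe, Int.card_Icc, Finset.prod_const, Finset.card_univ,
          Fintype.card_fin]
        congr 1
        · congr 1; omega
        · congr 1; omega

lemma redB_card_le (d K a b : ℕ) (c : ℤ) (hab : a + b = d) :
    Nat.card (RedB d K a b c) ≤ ((2*c+1).toNat)^b * (2*K+1)^a := by
  classical
  haveI : Finite (RedB d K a b c) :=
    ((pdk_finite d K).subset (fun f hf => hf.1)).to_subtype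
  have hex : ∀ f : RedB d K a b c, ∃ gh : Polynomial ℤ × Polynomial ℤ,
      gh.1.Monic ∧ gh.2.Monic ∧ gh.1.natDegree = a ∧ gh.2.natDegree = b ∧
      (f : Polynomial ℤ) = gh.1 * gh.2 ∧ ∀ i < b, |gh.2.coeff i| ≤ c := by
    intro f
    obtain ⟨_, g, h, hg, hh, hga, hhb, hfe, hbd⟩ := f.2
    exact ⟨(g, h), hg, hh, hga, hhb, hfe, hbd⟩
  choose W hW1 hW2 hW3 hW4 hW5 hW6 using hex
  set Ψ : RedB d K a b c →
      ((Fin b → (Finset.Icc (-c) c)) × (Fin a → (Finset.Icc (-(K:ℤ)) K))) :=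
    fun f => (fun i => ⟨(W f).2.coeff i, by
        have := hW6 f i i.2
        rw [Finset.mem_Icc]
        have := abs_le.mp this
        omega⟩,
      fun j => ⟨(f : Polynomial ℤ).coeff j, by
        obtain ⟨hm, hdeg, h0, hb⟩ := f.2.1
        rw [Finset.mem_Icc]
        have hj : (j : ℕ) < d := by omega
        have := abs_le.mp (hb _ hj)
        omega⟩) with hΨ
  have hinj : Function.Injective Ψ := by
    intro f₁ f₂ hf
    have h1 := congrArg Prod.fst hf
    have h2 := congrArg Prod.snd hf
    have hheq : (W f₁).2 = (W f₂).2 := by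
      apply monic_ext_coeff (hW2 f₁) (hW2 f₂) (hW4 f₁) (hW4 f₂)
      intro i hi
      exact Subtype.ext_iff.mp (congrFun h1 ⟨i, hi⟩)
    have hh0 : (W f₁).2.coeff 0 ≠ 0 := by
      obtain ⟨hm, hdeg, h0, hb⟩ := f₁.2.1
      intro hz
      apply h0
      rw [hW5 f₁, Polynomial.mul_coeff_zero, hz, mul_zero]
    have hgeq : (W f₁).1 = (W f₂).1 := by
      apply low_window_cancel (hW2 f₁) (hW4 f₁) hh0 (hW1 f₁) (hW3 f₁) (hW1 f₂) (hW3 f₂)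
      intro j hj
      have hcoord := Subtype.ext_iff.mp (congrFun h2 ⟨j, hj⟩)
      calc ((W f₁).1 * (W f₁).2).coeff j = (f₁ : Polynomial ℤ).coeff j := by
            rw [← hW5 f₁]
        _ = (f₂ : Polynomial ℤ).coeff j := hcoord
        _ = ((W f₂).1 * (W f₂).2).coeff j := by rw [← hW5 f₂]
        _ = ((W f₂).1 * (W f₁).2).coeff j := by rw [hheq]
    apply Subtype.ext
    rw [hW5 f₁, hW5 f₂, hgeq, hheq]
  calc Nat.card (RedB d K a b c) ≤
      Nat.card ((Fin b → (Finset.Icc (-c) c)) × (Fin a → (Finset.Icc (-(K:ℤ)) K))) :=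
        Nat.card_le_card_of_injective _ hinj
    _ = ((2*c+1).toNat)^b * (2*K+1)^a := by
        rw [Nat.card_eq_fintype_card, Fintype.card_prod, Fintype.card_pi, Fintype.card_pi]
        simp only [Fintype.card_coe, Int.card_Icc, Finset.prod_const, Finset.card_univ,
          Fintype.card_fin]
        congr 1
        · congr 1; omega
        · congr 1; omega


/-- Every reducible monic polynomial has a factorization into two monic factors of
positive degree, with the first of smaller or equal degree. -/
lemma monic_factorization {f : Polynomial ℤ} {d : ℕ} (hm : f.Monic) (hdeg : f.natDegree = d)
    (hnotirr : ¬ IrreducibleOverZ f) :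
    ∃ g h : Polynomial ℤ, g.Monic ∧ h.Monic ∧ 1 ≤ g.natDegree ∧
      g.natDegree ≤ h.natDegree ∧ g.natDegree + h.natDegree = d ∧ f = g * h := by
  rw [IrreducibleOverZ, not_not] at hnotirr
  obtain ⟨g0, h0, hg0, hh0, hfe⟩ := hnotirr
  have hfne : f ≠ 0 := hm.ne_zero
  have hgne : g0 ≠ 0 := by rintro rfl; rw [zero_mul] at hfe; exact hfne hfe
  have hhne : h0 ≠ 0 := by rintro rfl; rw [mul_zero] at hfe; exact hfne hfe
  have hdadd : g0.natDegree + h0.natDegree = d := by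
    rw [← hdeg, hfe, Polynomial.natDegree_mul hgne hhne]
  have hlc : g0.leadingCoeff * h0.leadingCoeff = 1 := by
    rw [← Polynomial.leadingCoeff_mul, ← hfe]
    exact hm
  have key : ∃ g1 h1 : Polynomial ℤ, g1.Monic ∧ h1.Monic ∧ g1.natDegree = g0.natDegree ∧
      h1.natDegree = h0.natDegree ∧ f = g1 * h1 := by
    rcases (Int.mul_eq_one_iff_eq_one_or_neg_one.mp hlc) with ⟨e1, e2⟩ | ⟨e1, e2⟩
    · exact ⟨g0, h0, e1, e2, rfl, rfl, hfe⟩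
    · refine ⟨-g0, -h0, ?_, ?_, ?_, ?_, ?_⟩
      · rw [Polynomial.Monic, Polynomial.leadingCoeff_neg, e1]; norm_num
      · rw [Polynomial.Monic, Polynomial.leadingCoeff_neg, e2]; norm_num
      · rw [Polynomial.natDegree_neg]
      · rw [Polynomial.natDegree_neg]
      · rw [neg_mul_neg]; exact hfe
  obtain ⟨g1, h1, hg1, hh1, hd1, hd2, hfe1⟩ := key
  have hg1pos : 1 ≤ g1.natDegree := by
    by_contra hlt
    have h0' : g1.natDegree = 0 := by omega
    have : h1.natDegree < d := by rw [hd2]; omega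
    rw [← hdeg, hfe1, Polynomial.natDegree_mul hg1.ne_zero hh1.ne_zero, h0', zero_add] at this
    omega
  have hh1pos : 1 ≤ h1.natDegree := by
    by_contra hlt
    have h0' : h1.natDegree = 0 := by omega
    have : g1.natDegree < d := by rw [hd1]; omega
    rw [← hdeg, hfe1, Polynomial.natDegree_mul hg1.ne_zero hh1.ne_zero, h0', add_zero] at this
    omega
  rcases le_total g1.natDegree h1.natDegree with hle | hle
  · exact ⟨g1, h1, hg1, hh1, hg1pos, hle, by omega, hfe1⟩
  · exact ⟨h1, g1, hh1, hg1, hh1pos, hle, by omega, by rw [hfe1, mul_comm]⟩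

lemma coverage (d K : ℕ) (f : Polynomial ℤ) (hf : f ∈ PdK d K) (hK : 1 ≤ K)
    (hnotirr : ¬ IrreducibleOverZ f) (T U : ℕ → ℕ → ℝ)
    (hT : ∀ a b, 0 < T a b)
    (hTU : ∀ a b, a + b = d → Real.sqrt ((d:ℝ)+1) * K ≤ T a b * U a b) :
    ∃ a b, 1 ≤ a ∧ a ≤ b ∧ a + b = d ∧
      (f ∈ RedA d K a b ⌊(2:ℝ)^a * T a b⌋ ∨ f ∈ RedB d K a b ⌊(2:ℝ)^b * U a b⌋) := by
  obtain ⟨hm, hdeg, h0, hb⟩ := hf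
  obtain ⟨g, h, hg, hh, hapos, hab, habd, hfe⟩ := monic_factorization hm hdeg hnotirr
  set a := g.natDegree
  set b := h.natDegree
  refine ⟨a, b, hapos, hab, habd, ?_⟩
  -- complex images
  set Gm := g.map (Int.castRingHom ℂ) with hGm
  set Hm := h.map (Int.castRingHom ℂ) with hHm
  set Fm := f.map (Int.castRingHom ℂ) with hFm
  have hGmm : Gm.Monic := hg.map _
  have hHmm : Hm.Monic := hh.map _
  have hFmm : Fm.Monic := hm.map _
  have hFmul : Fm = Gm * Hm := by rw [hFm, hGm, hHm, hfe, Polynomial.map_mul]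
  have hmul : mah Fm = mah Gm * mah Hm := by
    rw [hFmul]; exact mah_mul hGmm.ne_zero hHmm.ne_zero
  -- Landau bound
  have hW : mah Fm ≤ Real.sqrt ((d:ℝ)+1) * K := by
    have hFdeg : Fm.natDegree = d := by rw [hFm, hm.natDegree_map, hdeg]
    have h1 : mah Fm ^ 2 ≤ sq2 Fm (d+1) := by
      apply mah_sq_le_sq2 Fm hFmm
      omega
    have h2 : sq2 Fm (d+1) ≤ ((d:ℝ)+1) * K^2 := by
      unfold sq2
      calc ∑ i ∈ Finset.range (d+1), ‖Fm.coeff i‖^2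
          ≤ ∑ _i ∈ Finset.range (d+1), (K:ℝ)^2 := by
            apply Finset.sum_le_sum
            intro i hi
            have hle : |f.coeff i| ≤ (K:ℤ) := by
              rcases Nat.lt_or_ge i d with h' | h'
              · exact hb i h'
              · have : i = d := by
                  have := Finset.mem_range.mp hi
                  omega
                rw [this, ← hdeg, hm.coeff_natDegree, abs_one]
                exact_mod_cast hK
            have hcoeff : ‖Fm.coeff i‖ = |(f.coeff i : ℝ)| := by
              rw [hFm, Polynomial.coeff_map]
              simp
            rw [hcoeff]
            have h1 : |(f.coeff i : ℝ)| ≤ (K:ℝ) := by exact_mod_cast abs_le.mpr (abs_le.mp hle)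
            nlinarith [abs_nonneg ((f.coeff i : ℝ))]
          _ = ((d:ℝ)+1) * K^2 := by
            rw [Finset.sum_const, Finset.card_range]
            push_cast
            ring
    have h3 : mah Fm ^ 2 ≤ (Real.sqrt ((d:ℝ)+1) * K)^2 := by
      have : (Real.sqrt ((d:ℝ)+1) * K)^2 = ((d:ℝ)+1) * K^2 := by
        rw [mul_pow, Real.sq_sqrt (by positivity)]
      rw [this]
      linarith
    have hnn : 0 ≤ mah Fm := le_trans zero_le_one (one_le_mah Fm)
    have hnn2 : 0 ≤ Real.sqrt ((d:ℝ)+1) * K := by positivity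
    nlinarith
  by_cases hcase : mah Gm ≤ T a b
  · left
    refine ⟨⟨hm, hdeg, h0, hb⟩, g, h, hg, hh, rfl, rfl, hfe, ?_⟩
    intro i _
    rw [Int.le_floor]
    push_cast
    calc |((g.coeff i : ℤ) : ℝ)| ≤ 2 ^ a * mah Gm := coeff_norm_le_mah g hg i
      _ ≤ (2:ℝ)^a * T a b := by
          apply mul_le_mul_of_nonneg_left hcase (by positivity)
  · right
    refine ⟨⟨hm, hdeg, h0, hb⟩, g, h, hg, hh, rfl, rfl, hfe, ?_⟩
    have hUb : mah Hm ≤ U a b := by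
      have hTpos := hT a b
      have hGpos : (0:ℝ) < mah Gm := lt_of_lt_of_le zero_lt_one (one_le_mah Gm)
      have hHpos : (0:ℝ) < mah Hm := lt_of_lt_of_le zero_lt_one (one_le_mah Hm)
      have hGT : T a b < mah Gm := not_le.mp hcase
      have hWTU := hTU a b habd
      -- mah Gm * mah Hm ≤ T * U  and  T < mah Gm
      have hprod : mah Gm * mah Hm ≤ T a b * U a b := le_trans (hmul ▸ hW) hWTU
      by_contra hcon
      push_neg at hcon
      rcases le_or_gt (U a b) 0 with hU0 | hU0
      · nlinarith
      · nlinarith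
    intro i _
    rw [Int.le_floor]
    push_cast
    calc |((h.coeff i : ℤ) : ℝ)| ≤ 2 ^ b * mah Hm := coeff_norm_le_mah h hh i
      _ ≤ (2:ℝ)^b * U a b := by
          apply mul_le_mul_of_nonneg_left hUb (by positivity)


lemma ncard_biUnion_le {α : Type*} (s : Finset ℕ) (t : ℕ → Set α) :
    (⋃ i ∈ s, t i).ncard ≤ ∑ i ∈ s, (t i).ncard := by
  classical
  induction s using Finset.induction with
  | empty => simp
  | insert x s' hx ih =>
    rw [Finset.set_biUnion_insert, Finset.sum_insert hx]
    exact le_trans (Set.ncard_union_le _ _) (by omega)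

lemma key_bound (d K : ℕ) (hd : 2 ≤ d) (hK : 1 ≤ K)
    (σ : ℝ) (hσdef : σ = 3 * Real.sqrt ((2:ℝ)^d * (Real.sqrt ((d:ℝ)+1) * K)) / (2*(K:ℝ)+1))
    (hσhalf : σ ≤ 1/2) :
    (Nat.card {f : Polynomial ℤ | f ∈ PdK d K ∧ ¬ IrreducibleOverZ f} : ℝ)
      ≤ 12 * σ * Nat.card (PdK d K) := by
  classical
  set W : ℝ := Real.sqrt ((d:ℝ)+1) * K with hWdef
  set R : ℝ := Real.sqrt ((2:ℝ)^d * W) with hRdef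
  have h2d1 : (1:ℝ) ≤ (2:ℝ)^d := by
    calc (1:ℝ) = 1^d := (one_pow d).symm
      _ ≤ 2^d := pow_le_pow_left₀ (by norm_num) (by norm_num) d
  have hW1 : 1 ≤ W := by
    rw [hWdef]
    have h1 : (1:ℝ) ≤ Real.sqrt ((d:ℝ)+1) := by
      nlinarith [Real.sq_sqrt (show (0:ℝ) ≤ (d:ℝ)+1 by positivity),
        Real.sqrt_nonneg ((d:ℝ)+1), (Nat.cast_nonneg d : (0:ℝ) ≤ d)]
    have h2 : (1:ℝ) ≤ (K:ℝ) := by exact_mod_cast hK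
    nlinarith
  have hR1 : 1 ≤ R := by
    rw [hRdef]
    nlinarith [Real.sq_sqrt (show (0:ℝ) ≤ (2:ℝ)^d * W by nlinarith),
      Real.sqrt_nonneg ((2:ℝ)^d * W)]
  have hRpos : 0 < R := by linarith
  have hKpos : (0:ℝ) < K := by exact_mod_cast hK
  have h2K1 : (0:ℝ) < 2*(K:ℝ)+1 := by linarith
  have hσpos : 0 < σ := by
    rw [hσdef]
    exact div_pos (by linarith) h2K1
  have hσR : σ * (2*(K:ℝ)+1) = 3 * R := by
    rw [hσdef, hRdef]
    field_simp
  set c₀ : ℤ := ⌊R⌋ with hc₀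
  set Red : Set (Polynomial ℤ) := {f | f ∈ PdK d K ∧ ¬ IrreducibleOverZ f} with hRed
  set m : ℕ := d / 2 with hm
  have hm1 : 1 ≤ m := by omega
  -- coverage
  have hsub : Red ⊆ ⋃ a ∈ Finset.Icc 1 m, (RedA d K a (d-a) c₀ ∪ RedB d K a (d-a) c₀) := by
    intro f hf
    obtain ⟨a, b, ha1, hab, habd, hcase⟩ := coverage d K f hf.1 hK hf.2
      (fun a _ => R / 2^a) (fun _ b => R / 2^b)
      (fun a b => by positivity)
      (fun a b habd => by
        have h2a : ((2:ℝ)^a) ≠ 0 := by positivity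
        have h2b : ((2:ℝ)^b) ≠ 0 := by positivity
        have hRsq : R^2 = (2:ℝ)^d * W := Real.sq_sqrt (by positivity)
        have heq : R / 2^a * (R / 2^b) = R^2 / ((2:ℝ)^a * (2:ℝ)^b) := by ring
        rw [heq, hRsq, ← pow_add, habd]
        have h2dpos : (0:ℝ) < (2:ℝ)^d := by positivity
        have heq2 : (2:ℝ)^d * W / (2:ℝ)^d = W := by field_simp
        rw [heq2]
        try exact hWdef.ge)
    have hbval : b = d - a := by omega
    have hamem : a ∈ Finset.Icc 1 m := by
      rw [Finset.mem_Icc]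
      omega
    apply Set.mem_biUnion hamem
    have hfa : (2:ℝ)^a * (R / 2^a) = R := by field_simp
    have hfb : (2:ℝ)^b * (R / 2^b) = R := by field_simp
    rw [hfa, hfb, ← hc₀] at hcase
    rw [hbval] at hcase
    exact hcase
  -- cardinality of each piece
  have hconv : ∀ a : ℕ, a ∈ Finset.Icc 1 m →
      ((RedA d K a (d-a) c₀).ncard : ℝ) + ((RedB d K a (d-a) c₀).ncard : ℝ)
        ≤ (σ^a + σ^(d-a)) * (2*(K:ℝ)+1)^d := by
    intro a hamem
    rw [Finset.mem_Icc] at hamem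
    have habd : a + (d - a) = d := by omega
    have hcnat : ((2*c₀+1).toNat : ℝ) ≤ 3 * R := by
      have hc1 : (1:ℤ) ≤ c₀ := by
        rw [hc₀]
        exact_mod_cast Int.le_floor.mpr (by exact_mod_cast hR1)
      have : ((2*c₀+1).toNat : ℤ) = 2*c₀+1 := Int.toNat_of_nonneg (by omega)
      have hcast : ((2*c₀+1).toNat : ℝ) = 2*(c₀:ℝ)+1 := by exact_mod_cast this
      rw [hcast]
      have := Int.floor_le R
      rw [← hc₀] at this
      linarith
    have h3R : 0 ≤ 3 * R := by linarith
    have hKb : (0:ℝ) ≤ 2*(K:ℝ)+1 := by linarith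
    have hA := redA_card_le d K a (d-a) c₀ habd
    have hB := redB_card_le d K a (d-a) c₀ habd
    have hAr : ((RedA d K a (d-a) c₀).ncard : ℝ) ≤ (3*R)^a * (2*(K:ℝ)+1)^(d-a) := by
      rw [← Nat.card_coe_set_eq]
      calc (Nat.card (RedA d K a (d-a) c₀) : ℝ)
          ≤ (((2*c₀+1).toNat)^a * (2*K+1)^(d-a) : ℕ) := by exact_mod_cast hA
        _ = ((2*c₀+1).toNat : ℝ)^a * (2*(K:ℝ)+1)^(d-a) := by push_cast; ring
        _ ≤ (3*R)^a * (2*(K:ℝ)+1)^(d-a) := by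
            apply mul_le_mul_of_nonneg_right _ (by positivity)
            exact pow_le_pow_left₀ (by positivity) hcnat a
    have hBr : ((RedB d K a (d-a) c₀).ncard : ℝ) ≤ (3*R)^(d-a) * (2*(K:ℝ)+1)^a := by
      rw [← Nat.card_coe_set_eq]
      calc (Nat.card (RedB d K a (d-a) c₀) : ℝ)
          ≤ (((2*c₀+1).toNat)^(d-a) * (2*K+1)^a : ℕ) := by exact_mod_cast hB
        _ = ((2*c₀+1).toNat : ℝ)^(d-a) * (2*(K:ℝ)+1)^a := by push_cast; ring
        _ ≤ (3*R)^(d-a) * (2*(K:ℝ)+1)^a := by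
            apply mul_le_mul_of_nonneg_right _ (by positivity)
            exact pow_le_pow_left₀ (by positivity) hcnat (d-a)
    have hconvA : (3*R)^a * (2*(K:ℝ)+1)^(d-a) = σ^a * (2*(K:ℝ)+1)^d := by
      rw [← hσR, mul_pow, mul_assoc, ← pow_add, habd]
    have hconvB : (3*R)^(d-a) * (2*(K:ℝ)+1)^a = σ^(d-a) * (2*(K:ℝ)+1)^d := by
      rw [← hσR, mul_pow, mul_assoc, ← pow_add]
      congr 2
      omega
    rw [hconvA] at hAr
    rw [hconvB] at hBr
    linarith
  -- sum up
  have hRedFin : Red.Finite := (pdk_finite d K).subset (fun f hf => hf.1)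
  have hcard1 : (Red.ncard : ℝ) ≤ ∑ a ∈ Finset.Icc 1 m, (σ^a + σ^(d-a)) * (2*(K:ℝ)+1)^d := by
    have hstep1 : Red.ncard ≤ ∑ a ∈ Finset.Icc 1 m,
        ((RedA d K a (d-a) c₀ ∪ RedB d K a (d-a) c₀)).ncard := by
      have hUfin : (⋃ a ∈ Finset.Icc 1 m, (RedA d K a (d-a) c₀ ∪ RedB d K a (d-a) c₀)).Finite := by
        apply Set.Finite.biUnion (Finset.Icc 1 m).finite_toSet
        intro a _
        exact Set.Finite.union ((pdk_finite d K).subset (fun f hf => hf.1))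
          ((pdk_finite d K).subset (fun f hf => hf.1))
      exact le_trans (Set.ncard_le_ncard hsub hUfin) (ncard_biUnion_le _ _)
    calc (Red.ncard : ℝ) ≤ (∑ a ∈ Finset.Icc 1 m,
        ((RedA d K a (d-a) c₀ ∪ RedB d K a (d-a) c₀)).ncard : ℕ) := by exact_mod_cast hstep1
      _ = ∑ a ∈ Finset.Icc 1 m,
          (((RedA d K a (d-a) c₀ ∪ RedB d K a (d-a) c₀)).ncard : ℝ) := by push_cast; ring
      _ ≤ ∑ a ∈ Finset.Icc 1 m, (σ^a + σ^(d-a)) * (2*(K:ℝ)+1)^d := by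
          apply Finset.sum_le_sum
          intro a ha
          calc (((RedA d K a (d-a) c₀ ∪ RedB d K a (d-a) c₀)).ncard : ℝ)
              ≤ ((RedA d K a (d-a) c₀).ncard : ℝ) + ((RedB d K a (d-a) c₀).ncard : ℝ) := by
                exact_mod_cast Set.ncard_union_le _ _
            _ ≤ (σ^a + σ^(d-a)) * (2*(K:ℝ)+1)^d := hconv a ha
  -- geometric sums
  have hgeom1 : ∑ a ∈ Finset.Icc 1 m, σ^a ≤ 2*σ := by
    have hpt : ∀ a ∈ Finset.Icc 1 m, σ^a ≤ σ * (1/2)^(a-1) := by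
      intro a ha
      rw [Finset.mem_Icc] at ha
      have : σ^a = σ * σ^(a-1) := by
        rw [← pow_succ']
        congr 1
        omega
      rw [this]
      apply mul_le_mul_of_nonneg_left _ (le_of_lt hσpos)
      exact pow_le_pow_left₀ (le_of_lt hσpos) hσhalf _
    calc ∑ a ∈ Finset.Icc 1 m, σ^a ≤ ∑ a ∈ Finset.Icc 1 m, σ * (1/2:ℝ)^(a-1) :=
        Finset.sum_le_sum hpt
      _ = σ * ∑ a ∈ Finset.Icc 1 m, (1/2:ℝ)^(a-1) := by rw [Finset.mul_sum]
      _ ≤ σ * 2 := by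
          apply mul_le_mul_of_nonneg_left _ (le_of_lt hσpos)
          have hre : ∀ n : ℕ, ∑ a ∈ Finset.Icc 1 n, (1/2:ℝ)^(a-1) = ∑ j ∈ Finset.range n, (1/2:ℝ)^j := by
            intro n
            induction n with
            | zero => simp
            | succ k ihk =>
              rw [Finset.sum_Icc_succ_top (by omega), ihk, Finset.sum_range_succ]
              norm_num
          rw [hre m]
          have hgs : ∑ j ∈ Finset.range m, (1/2:ℝ)^j = 2 - 2*(1/2:ℝ)^m := by
            induction m with
            | zero => simp
            | succ n ihn => rw [Finset.sum_range_succ, ihn]; ring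
          rw [hgs]
          have : (0:ℝ) ≤ (1/2:ℝ)^m := by positivity
          linarith
      _ = 2*σ := by ring
  have hgeom2 : ∑ a ∈ Finset.Icc 1 m, σ^(d-a) ≤ 2*σ := by
    have hpt : ∀ a ∈ Finset.Icc 1 m, σ^(d-a) ≤ σ^m := by
      intro a ha
      rw [Finset.mem_Icc] at ha
      apply pow_le_pow_of_le_one (le_of_lt hσpos) (by linarith) (by omega)
    calc ∑ a ∈ Finset.Icc 1 m, σ^(d-a) ≤ ∑ _a ∈ Finset.Icc 1 m, σ^m :=
        Finset.sum_le_sum hpt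
      _ = (m:ℝ) * σ^m := by
          rw [Finset.sum_const, Nat.card_Icc]
          simp [nsmul_eq_mul]
      _ ≤ 2*σ := by
          have hσm : σ^m ≤ σ * (1/2)^(m-1) := by
            have : σ^m = σ * σ^(m-1) := by
              rw [← pow_succ']
              congr 1
              omega
            rw [this]
            apply mul_le_mul_of_nonneg_left _ (le_of_lt hσpos)
            exact pow_le_pow_left₀ (le_of_lt hσpos) hσhalf _
          have hm2 : (m:ℝ) ≤ 2^(m-1) * 2 := by
            have := Nat.lt_two_pow_self (n := m)
            have hcast : (m:ℝ) < 2^m := by exact_mod_cast this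
            have : (2:ℝ)^m = 2^(m-1)*2 := by
              rw [← pow_succ]
              congr 1
              omega
            linarith [hcast, this.symm.le]
          have hhalfpow : (0:ℝ) < (1/2:ℝ)^(m-1) := by positivity
          have h2pow : ((1/2:ℝ))^(m-1) = 1/(2^(m-1)) := by
            rw [div_pow]
            simp
          have hmm : (m:ℝ) * (1/2:ℝ)^(m-1) ≤ 2 := by
            rw [h2pow, mul_one_div, div_le_iff₀ (by positivity)]
            linarith
          calc (m:ℝ) * σ^m ≤ (m:ℝ) * (σ * (1/2)^(m-1)) :=
              mul_le_mul_of_nonneg_left hσm (Nat.cast_nonneg m)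
            _ = σ * ((m:ℝ) * (1/2)^(m-1)) := by ring
            _ ≤ σ * 2 := mul_le_mul_of_nonneg_left hmm (le_of_lt hσpos)
            _ = 2*σ := by ring
  -- combine
  have hRedBound : (Red.ncard : ℝ) ≤ 4*σ*(2*(K:ℝ)+1)^d := by
    calc (Red.ncard : ℝ) ≤ ∑ a ∈ Finset.Icc 1 m, (σ^a + σ^(d-a)) * (2*(K:ℝ)+1)^d := hcard1
      _ = (∑ a ∈ Finset.Icc 1 m, σ^a + ∑ a ∈ Finset.Icc 1 m, σ^(d-a)) * (2*(K:ℝ)+1)^d := by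
          rw [← Finset.sum_add_distrib, Finset.sum_mul]
      _ ≤ (2*σ + 2*σ) * (2*(K:ℝ)+1)^d := by
          apply mul_le_mul_of_nonneg_right _ (by positivity)
          linarith
      _ = 4*σ*(2*(K:ℝ)+1)^d := by ring
  -- denominator
  have hden : (K:ℝ) * (2*(K:ℝ)+1)^(d-1) ≤ (Nat.card (PdK d K) : ℝ) := by
    have := pdk_card_lb d K (by omega) hK
    calc (K:ℝ) * (2*(K:ℝ)+1)^(d-1) = ((K * (2*K+1)^(d-1) : ℕ) : ℝ) := by push_cast; ring
      _ ≤ (Nat.card (PdK d K) : ℝ) := by exact_mod_cast this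
  have hfinal : 4*σ*(2*(K:ℝ)+1)^d ≤ 12*σ*(Nat.card (PdK d K) : ℝ) := by
    have hsplit : (2*(K:ℝ)+1)^d = (2*(K:ℝ)+1) * (2*(K:ℝ)+1)^(d-1) := by
      rw [← pow_succ']
      congr 1
      omega
    have h3K : 2*(K:ℝ)+1 ≤ 3*K := by
      have hK1 : (1:ℝ) ≤ (K:ℝ) := by exact_mod_cast hK
      linarith
    calc 4*σ*(2*(K:ℝ)+1)^d = 4*σ*((2*(K:ℝ)+1) * (2*(K:ℝ)+1)^(d-1)) := by rw [hsplit]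
      _ ≤ 4*σ*((3*(K:ℝ)) * (2*(K:ℝ)+1)^(d-1)) := by
          apply mul_le_mul_of_nonneg_left _ (by positivity)
          apply mul_le_mul_of_nonneg_right h3K (by positivity)
      _ = 12*σ*((K:ℝ) * (2*(K:ℝ)+1)^(d-1)) := by ring
      _ ≤ 12*σ*(Nat.card (PdK d K) : ℝ) := by
          apply mul_le_mul_of_nonneg_left hden (by positivity)
  have hnum : (Nat.card Red : ℝ) = (Red.ncard : ℝ) := by
    rw [Nat.card_coe_set_eq]
  rw [hnum]
  linarith


noncomputable def EE (K : ℕ) : ℝ :=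
  (3/2) * Real.sqrt (Real.sqrt (Real.logb 2 K + 1) / (1 + Real.log K ^ 2))

lemma EE_tendsto_zero : Tendsto EE atTop (nhds 0) := by
  have hlog : Tendsto (fun K : ℕ => Real.log K) atTop atTop :=
    Real.tendsto_log_atTop.comp tendsto_natCast_atTop_atTop
  have hQ : Tendsto (fun K : ℕ => Real.sqrt (Real.logb 2 K + 1) / (1 + Real.log K ^ 2))
      atTop (nhds 0) := by
    apply tendsto_of_tendsto_of_tendsto_of_le_of_le'
      (tendsto_const_nhds (x := (0:ℝ)))
      ((tendsto_const_nhds (x := (2:ℝ))).div_atTop hlog)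
    · filter_upwards [hlog.eventually_ge_atTop 2] with K hK2
      positivity
    · filter_upwards [hlog.eventually_ge_atTop 2] with K hK2
      set L := Real.log K with hL
      have hLpos : (0:ℝ) < L := by linarith
      have hlogb : Real.logb 2 K = L / Real.log 2 := rfl
      have hlog2 : (0.6931471803:ℝ) < Real.log 2 := Real.log_two_gt_d9
      have h1 : Real.logb 2 K + 1 ≤ 2 * L := by
        rw [hlogb]
        have hstep : L / Real.log 2 ≤ 1.5 * L := by
          rw [div_le_iff₀ (by linarith)]
          nlinarith
        linarith
      have h2 : Real.sqrt (Real.logb 2 K + 1) ≤ 2 * L := by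
        calc Real.sqrt (Real.logb 2 K + 1) ≤ Real.sqrt (2*L) := by
              apply Real.sqrt_le_sqrt h1
          _ ≤ 2*L := by
              nlinarith [Real.sq_sqrt (show (0:ℝ) ≤ 2*L by linarith),
                Real.sqrt_nonneg (2*L)]
      have h3 : (1:ℝ) + L^2 ≥ L^2 := by nlinarith
      calc Real.sqrt (Real.logb 2 K + 1) / (1 + L ^ 2) ≤ (2*L)/(L^2) := by
            apply div_le_div₀ (by positivity) h2 (by positivity) (by nlinarith)
        _ = 2 / L := by
            rw [sq, mul_comm 2 L, mul_div_mul_left _ _ (ne_of_gt hLpos)]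
  have := hQ.sqrt
  rw [Real.sqrt_zero] at this
  have := this.const_mul (3/2 : ℝ)
  rw [mul_zero] at this
  exact this.congr (fun K => rfl)


end Auxiliary

theorem stmt_14 (d : ℕ → ℕ)
    (hd : ∀ᶠ K : ℕ in atTop,
      2 ≤ d K ∧ (d K : ℝ) ≤ Real.logb 2 K - Real.logb 2 (1 + (Real.log K) ^ 2)) :
    Tendsto (fun K : ℕ =>
        (Nat.card {f : Polynomial ℤ | f ∈ PdK (d K) K ∧ IrreducibleOverZ f} : ℝ) /
          (Nat.card ↥(PdK (d K) K) : ℝ))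
      atTop (nhds 1) := by
  have hE := EE_tendsto_zero
  have hlow : Tendsto (fun K : ℕ => 1 - 12 * EE K) atTop (nhds 1) := by
    have := (tendsto_const_nhds (x := (1:ℝ)) (f := atTop (α := ℕ))).sub (hE.const_mul 12)
    simpa using this
  apply tendsto_of_tendsto_of_tendsto_of_le_of_le' hlow
    (tendsto_const_nhds (x := (1:ℝ)))
  · -- lower bound eventually
    filter_upwards [hd, hE.eventually (eventually_le_nhds (by norm_num : (0:ℝ) < 1/24)),
      eventually_ge_atTop 2] with K hdK hEK hK2
    obtain ⟨h2d, hlogK⟩ := hdK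
    have hK1 : 1 ≤ K := by omega
    have hKpos' : (0:ℝ) < K := by exact_mod_cast Nat.lt_of_lt_of_le Nat.zero_lt_one hK1
    set M : ℝ := 1 + Real.log K ^ 2 with hM
    have hM1 : (1:ℝ) ≤ M := by nlinarith [sq_nonneg (Real.log K)]
    have hMpos : (0:ℝ) < M := by linarith
    set Q : ℝ := Real.sqrt (Real.logb 2 K + 1) / M with hQ
    have hQnn : 0 ≤ Q := by positivity
    have hEE : EE K = (3/2) * Real.sqrt Q := rfl
    -- bound 2^d ≤ K / M
    have h2dle : (2:ℝ)^(d K) ≤ (K:ℝ) / M := by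
      rw [← Real.rpow_natCast 2 (d K)]
      calc (2:ℝ)^((d K : ℕ):ℝ)
          ≤ (2:ℝ)^(Real.logb 2 K - Real.logb 2 M) :=
            Real.rpow_le_rpow_of_exponent_le one_le_two hlogK
        _ = (2:ℝ)^(Real.logb 2 (K:ℝ)) / (2:ℝ)^(Real.logb 2 M) := Real.rpow_sub two_pos _ _
        _ = (K:ℝ) / M := by
            rw [Real.rpow_logb two_pos (by norm_num) hKpos',
              Real.rpow_logb two_pos (by norm_num) hMpos]
    have hdlogb : ((d K : ℕ):ℝ) ≤ Real.logb 2 K := by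
      have h0 : 0 ≤ Real.logb 2 M := Real.logb_nonneg one_lt_two hM1
      linarith
    -- σ and its bound
    set σ : ℝ := 3 * Real.sqrt ((2:ℝ)^(d K) * (Real.sqrt (((d K):ℝ)+1) * K)) / (2*(K:ℝ)+1)
      with hσdef
    have hσE : σ ≤ EE K := by
      have hsq1 : Real.sqrt (((d K):ℝ)+1) ≤ Real.sqrt (Real.logb 2 K + 1) :=
        Real.sqrt_le_sqrt (by linarith)
      have hinner : (2:ℝ)^(d K) * (Real.sqrt (((d K):ℝ)+1) * K) ≤ (K:ℝ)^2 * Q := by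
        have hs1 : 0 ≤ Real.sqrt (((d K):ℝ)+1) := Real.sqrt_nonneg _
        have hstep : (2:ℝ)^(d K) * (Real.sqrt (((d K):ℝ)+1) * K)
            ≤ ((K:ℝ)/M) * (Real.sqrt (Real.logb 2 K + 1) * K) := by
          apply mul_le_mul h2dle _ (by positivity) (by positivity)
          exact mul_le_mul_of_nonneg_right hsq1 (le_of_lt hKpos')
        calc (2:ℝ)^(d K) * (Real.sqrt (((d K):ℝ)+1) * K)
            ≤ ((K:ℝ)/M) * (Real.sqrt (Real.logb 2 K + 1) * K) := hstep
          _ = (K:ℝ)^2 * Q := by rw [hQ]; field_simp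
      have hsqrt2 : Real.sqrt ((2:ℝ)^(d K) * (Real.sqrt (((d K):ℝ)+1) * K))
          ≤ (K:ℝ) * Real.sqrt Q := by
        calc Real.sqrt ((2:ℝ)^(d K) * (Real.sqrt (((d K):ℝ)+1) * K))
            ≤ Real.sqrt ((K:ℝ)^2 * Q) := Real.sqrt_le_sqrt hinner
          _ = (K:ℝ) * Real.sqrt Q := by
              rw [Real.sqrt_mul (sq_nonneg _), Real.sqrt_sq (le_of_lt hKpos')]
      rw [hσdef, hEE]
      rw [div_le_iff₀ (by linarith)]
      have hsqQ : 0 ≤ Real.sqrt Q := Real.sqrt_nonneg _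
      nlinarith [hsqrt2]
    have hσhalf : σ ≤ 1/2 := by
      have : EE K ≤ 1/24 := hEK
      linarith
    have hσpos : 0 ≤ σ := by rw [hσdef]; positivity
    -- cardinalities
    set N : ℕ := Nat.card (PdK (d K) K) with hN
    set Airr : Set (Polynomial ℤ) := {f | f ∈ PdK (d K) K ∧ IrreducibleOverZ f} with hAirr
    set Ared : Set (Polynomial ℤ) := {f | f ∈ PdK (d K) K ∧ ¬ IrreducibleOverZ f} with hAred
    have hfinI : Airr.Finite := (pdk_finite (d K) K).subset (fun f hf => hf.1)
    have hfinR : Ared.Finite := (pdk_finite (d K) K).subset (fun f hf => hf.1)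
    have hpart : Nat.card Airr + Nat.card Ared = N := by
      rw [hN, Nat.card_coe_set_eq, Nat.card_coe_set_eq, Nat.card_coe_set_eq]
      rw [← Set.ncard_union_eq (by
        rw [Set.disjoint_left]
        rintro f ⟨_, hf1⟩ ⟨_, hf2⟩
        exact hf2 hf1) hfinI hfinR]
      congr 1
      ext f
      constructor
      · rintro (⟨hf, _⟩ | ⟨hf, _⟩) <;> exact hf
      · intro hf
        by_cases hi : IrreducibleOverZ f
        · exact Or.inl ⟨hf, hi⟩
        · exact Or.inr ⟨hf, hi⟩
    have hNpos : 0 < N := by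
      have := pdk_card_lb (d K) K (by omega) hK1
      have h1 : 0 < K * (2*K+1)^(d K - 1) := Nat.mul_pos (by omega) (pow_pos (by omega) _)
      omega
    have hNposR : (0:ℝ) < N := by exact_mod_cast hNpos
    have hred := key_bound (d K) K h2d hK1 σ hσdef hσhalf
    -- hred : (Nat.card Ared : ℝ) ≤ 12 σ N
    have hirr : (N:ℝ) - 12 * EE K * N ≤ (Nat.card Airr : ℝ) := by
      have hcast : (Nat.card Airr : ℝ) = (N:ℝ) - (Nat.card Ared : ℝ) := by
        have := hpart
        push_cast [← this]
        ring
      rw [hcast]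
      have h12 : 12 * σ * (N:ℝ) ≤ 12 * EE K * N := by
        apply mul_le_mul_of_nonneg_right _ (le_of_lt hNposR)
        linarith
      have : (Nat.card Ared : ℝ) ≤ 12 * σ * N := hred
      linarith
    rw [le_div_iff₀ hNposR]
    calc (1 - 12 * EE K) * (N:ℝ) = (N:ℝ) - 12 * EE K * N := by ring
      _ ≤ (Nat.card Airr : ℝ) := hirr
  · -- upper bound eventually: ratio ≤ 1 always
    apply Eventually.of_forall
    intro K
    set N : ℕ := Nat.card (PdK (d K) K) with hN
    rcases Nat.eq_zero_or_pos N with h0 | hpos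
    · rw [h0]
      simp
    · have hle : Nat.card {f : Polynomial ℤ | f ∈ PdK (d K) K ∧ IrreducibleOverZ f} ≤ N := by
        rw [hN, Nat.card_coe_set_eq, Nat.card_coe_set_eq]
        apply Set.ncard_le_ncard (fun f hf => hf.1) (pdk_finite (d K) K)
      rw [div_le_one (by exact_mod_cast hpos)]
      exact_mod_cast hle
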